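/- Every separative quasi-cancellative semigroup is cancellative (both left and right cancellative). -/

import Mathlib

theorem separative_quasiCancellative_is_cancellative {S : Type*} [Semigroup S]
    (hsep : (∀ x y : S, x * x = x * y → y * y = y * x → x = y) ∧
            (∀ x y : S, x * x = y * x → y * y = x * y → x = y))
    (hqc : ∀ a b c : S,
      (∀ x y : WithOne S,
        (x * ↑b * y = x * ↑c * y ↔ y * x * ↑b = y * x * ↑c) ∧
        (x * ↑b * y = x * ↑c * y ↔ ↑b * y * x = ↑c * y * x)) →
      a * b = a * c → b = c) :
    (∀ a b c : S, a * b = a * c → b = c) ∧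
    (∀ a b c : S, b * a = c * a → b = c) := by
  -- separativity lifts to WithOne S
  have sep1 : ∀ x y : WithOne S, x * x = x * y → y * y = y * x → x = y := by
    intro x y
    induction x using WithOne.recOneCoe with
    | one => intro h1 _; simpa using h1
    | coe s =>
      induction y using WithOne.recOneCoe with
      | one => intro _ h2; simp at h2
      | coe t =>
        intro h1 h2
        simp only [← WithOne.coe_mul, WithOne.coe_inj] at h1 h2 ⊢
        exact hsep.1 s t h1 h2
  have sep2 : ∀ x y : WithOne S, x * x = y * x → y * y = x * y → x = y := by
    intro x y
    induction x using WithOne.recOneCoe with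
    | one => intro h1 _; simpa using h1
    | coe s =>
      induction y using WithOne.recOneCoe with
      | one => intro _ h2; simpa using h2.symm
      | coe t =>
        intro h1 h2
        simp only [← WithOne.coe_mul, WithOne.coe_inj] at h1 h2 ⊢
        exact hsep.2 s t h1 h2
  -- Burmistrovich's Lemma 1 in WithOne S
  have lem1 : ∀ b c x y : WithOne S, x * b * y = x * c * y → b * y * x = c * y * x := by
    intro b c x y h
    have key : ∀ p q : WithOne S, (p * y * x) * (q * y * x) = (p * y) * ((x * q * y) * x) := by
      intro p q; simp only [mul_assoc]
    apply sep1
    · rw [key b b, h, ← key b c]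
    · rw [key c c, ← h, ← key c b]
  -- its dual
  have lem2 : ∀ b c x y : WithOne S, x * b * y = x * c * y → y * x * b = y * x * c := by
    intro b c x y h
    have key : ∀ p q : WithOne S, (y * x * p) * (y * x * q) = y * ((x * p * y) * (x * q)) := by
      intro p q; simp only [mul_assoc]
    apply sep2
    · rw [key b b, h, ← key c b]
    · rw [key c c, ← h, ← key b c]
  -- the quasi-cancellation condition holds universally
  have cond : ∀ b c : S, ∀ x y : WithOne S,
      (x * ↑b * y = x * ↑c * y ↔ y * x * ↑b = y * x * ↑c) ∧
      (x * ↑b * y = x * ↑c * y ↔ ↑b * y * x = ↑c * y * x) := by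
    intro b c x y
    constructor
    · constructor
      · exact lem2 _ _ x y
      · intro hB
        -- B ⇒ C ⇒ A
        have hB' : (y * x) * ↑b * 1 = (y * x) * ↑c * 1 := by simpa using hB
        have hC := lem1 _ _ (y * x) 1 hB'
        -- hC : ↑b * 1 * (y*x) = ↑c * 1 * (y*x)
        have hC' : (1 : WithOne S) * (↑b * y) * x = 1 * (↑c * y) * x := by
          simpa [mul_assoc] using hC
        have hA := lem2 _ _ 1 x hC'
        simpa [mul_assoc] using hA
    · constructor
      · exact lem1 _ _ x y
      · intro hC
        -- C ⇒ A
        have hC' : (1 : WithOne S) * (↑b * y) * x = 1 * (↑c * y) * x := by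
          simpa [mul_assoc] using hC
        have hA := lem2 _ _ 1 x hC'
        simpa [mul_assoc] using hA
  have left : ∀ a b c : S, a * b = a * c → b = c := fun a b c h =>
    hqc a b c (cond b c) h
  refine ⟨left, ?_⟩
  intro a b c h
  have h' : (1 : WithOne S) * ↑b * ↑a = 1 * ↑c * ↑a := by
    simp only [one_mul, ← WithOne.coe_mul, WithOne.coe_inj]; exact h
  have h2 := lem2 _ _ 1 (↑a) h'
  have h3 : a * b = a * c := by
    simpa only [mul_one, one_mul, ← WithOne.coe_mul, WithOne.coe_inj] using h2
  exact left a b c h3
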